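/- Let G be a non-abelian finite nilpotent n-centralizer F-group with |G/Z(G)| = p^k for a prime p and k ≥ 1. Then p divides n−2. -/

import Mathlib

/-- The set of element centralizers of a group `G`. -/
def centSet (G : Type*) [Group G] : Set (Subgroup G) :=
  Set.range fun x : G => Subgroup.centralizer {x}

/-- `G` is an F-group if for non-central `x, y`, `C(x) ≤ C(y)` implies `C(x) = C(y)`. -/
def IsFGroup (G : Type*) [Group G] : Prop :=
  ∀ x y : G, x ∉ Subgroup.center G → y ∉ Subgroup.center G →
    Subgroup.centralizer {x} ≤ Subgroup.centralizer {y} →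
    Subgroup.centralizer ({x} : Set G) = Subgroup.centralizer {y}

namespace Stmt6Aux

variable {G : Type*} [Group G]

lemma cent_mul_center (x z : G) (hz : z ∈ Subgroup.center G) :
    Subgroup.centralizer ({x * z} : Set G) = Subgroup.centralizer {x} := by
  ext g
  simp only [Subgroup.mem_centralizer_singleton_iff]
  have hgz : Commute g z := Subgroup.mem_center_iff.mp hz g
  constructor
  · intro h
    have h2 : Commute g (x * z * z⁻¹) := Commute.mul_right h hgz.inv_right
    simpa using h2.eq
  · intro h
    exact Commute.mul_right h hgz

lemma cent_inv (x : G) :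
    Subgroup.centralizer ({x⁻¹} : Set G) = Subgroup.centralizer {x} := by
  ext g
  simp only [Subgroup.mem_centralizer_singleton_iff]
  exact ⟨fun h => by simpa using (Commute.inv_right h).eq, fun h => Commute.inv_right h⟩

lemma cent_eq_top_iff (x : G) :
    Subgroup.centralizer ({x} : Set G) = ⊤ ↔ x ∈ Subgroup.center G := by
  rw [Subgroup.centralizer_eq_top_iff_subset, Set.singleton_subset_iff, SetLike.mem_coe]

/-- The centralizer map, descended to `G ⧸ Z(G)`. -/
def phi : G ⧸ Subgroup.center G → Subgroup G :=
  Quotient.lift (fun x : G => Subgroup.centralizer {x}) (by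
    intro a b hab
    have h : a⁻¹ * b ∈ Subgroup.center G := QuotientGroup.leftRel_apply.mp hab
    have hb : b = a * (a⁻¹ * b) := by group
    show Subgroup.centralizer ({a} : Set G) = Subgroup.centralizer {b}
    rw [hb, cent_mul_center a _ h])

lemma phi_mk (x : G) : phi (x : G ⧸ Subgroup.center G) = Subgroup.centralizer {x} := rfl

lemma phi_eq_top_iff (q : G ⧸ Subgroup.center G) : phi q = ⊤ ↔ q = 1 := by
  induction q using QuotientGroup.induction_on with
  | H x => rw [phi_mk, cent_eq_top_iff, QuotientGroup.eq_one_iff]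

lemma phi_inv (q : G ⧸ Subgroup.center G) : phi q⁻¹ = phi q := by
  induction q using QuotientGroup.induction_on with
  | H x =>
    have h : (x : G ⧸ Subgroup.center G)⁻¹ = ((x⁻¹ : G) : G ⧸ Subgroup.center G) := rfl
    rw [h, phi_mk, phi_mk, cent_inv]

/-- The fiber of `phi` over a proper centralizer `C`, together with `1`, is a subgroup
of `G ⧸ Z(G)`. -/
def fiberSubgroup (hF : IsFGroup G) (C : Subgroup G) (hC : C ≠ ⊤) :
    Subgroup (G ⧸ Subgroup.center G) where
  carrier := insert 1 {q | phi q = C}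
  one_mem' := Set.mem_insert _ _
  inv_mem' := by
    rintro q (rfl | hq)
    · simp
    · refine Set.mem_insert_iff.mpr (Or.inr ?_)
      show phi q⁻¹ = C
      rw [phi_inv]
      exact hq
  mul_mem' := by
    rintro a b (rfl | ha) (rfl | hb)
    · simp
    · simpa using Set.mem_insert_iff.mpr (Or.inr hb)
    · simpa using Set.mem_insert_iff.mpr (Or.inr ha)
    · simp only [Set.mem_setOf_eq] at ha hb
      obtain ⟨x, rfl⟩ := QuotientGroup.mk_surjective a
      obtain ⟨y, rfl⟩ := QuotientGroup.mk_surjective b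
      rw [phi_mk] at ha hb
      have hmul : (x : G ⧸ Subgroup.center G) * (y : G ⧸ Subgroup.center G)
          = ((x * y : G) : G ⧸ Subgroup.center G) := rfl
      refine Set.mem_insert_iff.mpr ?_
      by_cases hxy : x * y ∈ Subgroup.center G
      · left
        rw [hmul, QuotientGroup.eq_one_iff]
        exact hxy
      · right
        have hx : x ∉ Subgroup.center G := fun h => hC (ha ▸ (cent_eq_top_iff x).mpr h)
        have hle : Subgroup.centralizer ({x} : Set G) ≤ Subgroup.centralizer {x * y} := by
          intro g hg
          have hgx := Subgroup.mem_centralizer_singleton_iff.mp hg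
          have hg' : g ∈ Subgroup.centralizer ({y} : Set G) := by rw [hb, ← ha]; exact hg
          have hgy := Subgroup.mem_centralizer_singleton_iff.mp hg'
          rw [Subgroup.mem_centralizer_singleton_iff]
          rw [← mul_assoc, hgx, mul_assoc, hgy, ← mul_assoc]
        have heq := hF x (x * y) hx hxy hle
        show phi _ = C
        rw [hmul, phi_mk, ← heq, ha]

end Stmt6Aux

open Stmt6Aux in
/-- For a non-abelian finite nilpotent `n`-centralizer F-group with `|G/Z(G)| = p^k`
(`p` prime, `k ≥ 1`), `p` divides `n - 2`. -/
theorem stmt6 (G : Type*) [Group G] [Finite G] [Group.IsNilpotent G]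
    (hG : ¬∀ a b : G, a * b = b * a) (n p k : ℕ) (hp : p.Prime) (hk : 1 ≤ k)
    (hFgroup : IsFGroup G)
    (hcard : (centSet G).ncard = n)
    (horder : Nat.card (G ⧸ Subgroup.center G) = p ^ k) :
    p ∣ (n - 2) := by
  classical
  have : Fintype G := Fintype.ofFinite G
  set Q := G ⧸ Subgroup.center G with hQ
  have : Fintype Q := Fintype.ofFinite Q
  set Tf : Finset (Subgroup G) := (Finset.univ.erase (1 : Q)).image phi with hTf
  have htop_notmem : (⊤ : Subgroup G) ∉ Tf := by
    intro h
    obtain ⟨q, hq, hq2⟩ := Finset.mem_image.mp h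
    exact Finset.ne_of_mem_erase hq ((phi_eq_top_iff q).mp hq2)
  have hcs : centSet G = insert (⊤ : Subgroup G) (Tf : Set (Subgroup G)) := by
    ext C
    constructor
    · rintro ⟨x, rfl⟩
      by_cases hx : x ∈ Subgroup.center G
      · left
        exact (cent_eq_top_iff x).mpr hx
      · right
        refine Finset.mem_coe.mpr (Finset.mem_image.mpr ⟨(x : Q), ?_, (phi_mk x)⟩)
        refine Finset.mem_erase.mpr ⟨?_, Finset.mem_univ _⟩
        rw [Ne, QuotientGroup.eq_one_iff]
        exact hx
    · rintro (hC | hC)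
      · exact ⟨1, by rw [hC, cent_eq_top_iff]; exact Subgroup.one_mem _⟩
      · obtain ⟨q, _, rfl⟩ := Finset.mem_image.mp (Finset.mem_coe.mp hC)
        obtain ⟨x, rfl⟩ := QuotientGroup.mk_surjective q
        exact ⟨x, (phi_mk x).symm⟩
  have hn : n = Tf.card + 1 := by
    rw [← hcard, hcs, Set.ncard_insert_of_notMem (by simpa using htop_notmem)
      (Tf : Set (Subgroup G)).toFinite, Set.ncard_coe_finset]
  -- fiber counting
  have hfiber : ∀ C ∈ Tf,
      p ∣ ((Finset.univ.erase (1 : Q)).filter (fun q => phi q = C)).card + 1 := by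
    intro C hC
    obtain ⟨q0, hq0, hq0C⟩ := Finset.mem_image.mp hC
    have hCne : C ≠ ⊤ := fun h => Finset.ne_of_mem_erase hq0 ((phi_eq_top_iff q0).mp (hq0C.trans h))
    set H := fiberSubgroup hFgroup C hCne with hH
    have hcarrier : (H : Set Q) = insert 1 {q | phi q = C} := rfl
    have hone : (1 : Q) ∉ {q | phi q = C} := fun h => hCne (by
      rw [← h]; exact (phi_eq_top_iff (1 : Q)).mpr rfl)
    have hset : {q : Q | phi q = C} =
        ↑((Finset.univ.erase (1 : Q)).filter (fun q => phi q = C)) := by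
      ext q
      simp only [Finset.coe_filter, Set.mem_setOf_eq, Finset.mem_erase, Finset.mem_univ,
        and_true]
      exact ⟨fun h => ⟨fun h1 => hone (h1 ▸ h), h⟩, fun h => h.2⟩
    have e1 : Nat.card H = (H : Set Q).ncard := by
      rw [← Nat.card_coe_set_eq, SetLike.coe_sort_coe]
    have hcardH : Nat.card H =
        ((Finset.univ.erase (1 : Q)).filter (fun q => phi q = C)).card + 1 := by
      rw [e1, hcarrier, Set.ncard_insert_of_notMem hone (Set.toFinite _), hset,
        Set.ncard_coe_finset]
    have hdvd : Nat.card H ∣ p ^ k := by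
      rw [← horder]
      exact Subgroup.card_subgroup_dvd_card H
    obtain ⟨m, hm, hcardH2⟩ := (Nat.dvd_prime_pow hp).mp hdvd
    have hm1 : 1 ≤ m := by
      by_contra hm0
      have h0 : m = 0 := by omega
      rw [h0, pow_zero] at hcardH2
      have hq0H : q0 ∈ H := Set.mem_insert_iff.mpr (Or.inr hq0C)
      have hbot := Subgroup.eq_bot_of_card_eq H hcardH2
      rw [hbot, Subgroup.mem_bot] at hq0H
      exact Finset.ne_of_mem_erase hq0 hq0H
    rw [← hcardH, hcardH2]
    exact dvd_pow_self p (by omega)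
  have htotal : (Finset.univ.erase (1 : Q)).card =
      ∑ C ∈ Tf, ((Finset.univ.erase (1 : Q)).filter (fun q => phi q = C)).card := by
    apply Finset.card_eq_sum_card_fiberwise
    intro q hq
    exact Finset.mem_image.mpr ⟨q, hq, rfl⟩
  have hQcard : (Finset.univ.erase (1 : Q)).card = p ^ k - 1 := by
    rw [Finset.card_erase_of_mem (Finset.mem_univ _), Finset.card_univ,
      ← Nat.card_eq_fintype_card, horder]
  have hsum : p ∣ (p ^ k - 1) + Tf.card := by
    have h : (p ^ k - 1) + Tf.card =
        ∑ C ∈ Tf, (((Finset.univ.erase (1 : Q)).filter (fun q => phi q = C)).card + 1) := by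
      rw [Finset.sum_add_distrib, ← htotal, hQcard, Finset.sum_const, smul_eq_mul, mul_one]
    rw [h]
    exact Finset.dvd_sum hfiber
  have hTne : 1 ≤ Tf.card := by
    rw [Finset.one_le_card]
    push_neg at hG
    obtain ⟨a, b, hab⟩ := hG
    obtain ⟨x, hx⟩ : ∃ x : G, x ∉ Subgroup.center G := by
      by_contra h
      push_neg at h
      exact hab ((Subgroup.mem_center_iff.mp (h a) b).symm)
    exact ⟨phi (x : Q), Finset.mem_image.mpr ⟨(x : Q),
      Finset.mem_erase.mpr ⟨by rw [Ne, QuotientGroup.eq_one_iff]; exact hx,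
        Finset.mem_univ _⟩, rfl⟩⟩
  have hpk1 : 1 ≤ p ^ k := Nat.one_le_pow _ _ hp.pos
  have hfin : p ∣ Tf.card - 1 := by
    have h1 : (p : ℤ) ∣ ((p : ℤ) ^ k - 1) + Tf.card := by
      have h := Int.natCast_dvd_natCast.mpr hsum
      push_cast [Nat.cast_sub hpk1] at h
      exact_mod_cast h
    have h2 : (p : ℤ) ∣ (p : ℤ) ^ k := dvd_pow_self _ (by omega)
    have h3 : (p : ℤ) ∣ (Tf.card : ℤ) - 1 := by
      have he : ((p : ℤ) ^ k - 1) + Tf.card - (p : ℤ) ^ k = (Tf.card : ℤ) - 1 := by ring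
      exact he ▸ dvd_sub h1 h2
    rw [← Int.natCast_dvd_natCast]
    push_cast [Nat.cast_sub hTne]
    exact h3
  have hfin2 : n - 2 = Tf.card - 1 := by omega
  rw [hfin2]
  exact hfin
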